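/- Let a, b ∈ Δₙ be strictly positive probability vectors, C ∈ ℝ₊^{n×n}, γ > 0, K := exp(−C/γ). Let (f_k, g_k) be the Sinkhorn iterates starting from arbitrary f₀, g₀ ∈ ℝⁿ, and P_k := diag(e^{f_k/γ}) K diag(e^{g_k/γ}). Then for every k ≥ 2, h(f_{k+1}, g_{k+1}) − h(f_k, g_k) ≥ (γ/2)(‖P_k𝟏ₙ − a‖₁ + ‖P_kᵀ𝟏ₙ − b‖₁)². -/

import Mathlib

/-- The dual entropic OT objective
`h(f,g) = ⟨f,a⟩ + ⟨g,b⟩ − γ Σ_{i,j} exp((f_i + g_j − C_{ij})/γ)`. -/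
noncomputable def dualObj {n : ℕ} (a b : Fin n → ℝ) (C : Matrix (Fin n) (Fin n) ℝ)
    (γ : ℝ) (f g : Fin n → ℝ) : ℝ :=
  (∑ i, f i * a i) + (∑ j, g j * b j) -
    γ * ∑ i, ∑ j, Real.exp ((f i + g j - C i j) / γ)

/-- The transport plan `P = diag(e^{f/γ}) K diag(e^{g/γ})` with `K = exp(−C/γ)`. -/
noncomputable def plan {n : ℕ} (C : Matrix (Fin n) (Fin n) ℝ) (γ : ℝ)
    (f g : Fin n → ℝ) : Matrix (Fin n) (Fin n) ℝ :=
  fun i j => Real.exp (f i / γ) * Real.exp (-C i j / γ) * Real.exp (g j / γ)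

/-- `(f k, g k)` is the sequence of Sinkhorn iterates (in dual form): for even `k`,
`f (k+1) = γ log a − γ log (K e^{g k / γ})` and `g (k+1) = g k`; for odd `k`,
`f (k+1) = f k` and `g (k+1) = γ log b − γ log (Kᵀ e^{f k / γ})`,
where `K = exp(−C/γ)`. -/
def SinkhornSeq {n : ℕ} (a b : Fin n → ℝ) (C : Matrix (Fin n) (Fin n) ℝ) (γ : ℝ)
    (f g : ℕ → Fin n → ℝ) : Prop :=
  ∀ k : ℕ,
    (Even k →
      f (k+1) = (fun i => γ * Real.log (a i) -
        γ * Real.log (∑ j, Real.exp (-C i j / γ) * Real.exp (g k j / γ))) ∧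
      g (k+1) = g k) ∧
    (¬ Even k →
      f (k+1) = f k ∧
      g (k+1) = (fun j => γ * Real.log (b j) -
        γ * Real.log (∑ i, Real.exp (-C i j / γ) * Real.exp (f k i / γ))))

open Real Finset

private noncomputable def psiF (t : ℝ) : ℝ := Real.log t - 3*((t-1)*(t+5))/(2*(t+2)^2)
private noncomputable def FF (t : ℝ) : ℝ := t * Real.log t - t + 1 - 3*(t-1)^2/(2*(t+2))

private lemma hasDerivAt_psiF {x : ℝ} (hx : 0 < x) :
    HasDerivAt psiF (((x-1)^2*(x+8))/(x*(x+2)^3)) x := by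
  have hx2 : (2*(x+2)^2) ≠ 0 := by positivity
  have h1 : HasDerivAt Real.log (1/x) x := by
    simpa [one_div] using Real.hasDerivAt_log (ne_of_gt hx)
  have hnum : HasDerivAt (fun t : ℝ => 3*((t-1)*(t+5))) (3*((x-1)+(x+5))) x := by
    have : HasDerivAt (fun t : ℝ => (t-1)*(t+5)) (1*(x+5) + (x-1)*1) x := by
      exact ((hasDerivAt_id x).sub_const 1).mul ((hasDerivAt_id x).add_const 5)
    simpa [mul_comm, mul_assoc, add_comm] using this.const_mul 3
  have hden : HasDerivAt (fun t : ℝ => 2*(t+2)^2) (2*(2*(x+2))) x := by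
    have : HasDerivAt (fun t : ℝ => (t+2)^2) (2*(x+2)^1) x := by
      simpa using ((hasDerivAt_id x).add_const 2).fun_pow 2
    simpa [mul_comm, mul_assoc] using this.const_mul 2
  have hq := hnum.div hden hx2
  have := h1.sub hq
  refine this.congr_deriv ?_
  field_simp
  ring

private lemma hasDerivAt_FF {x : ℝ} (hx : 0 < x) : HasDerivAt FF (psiF x) x := by
  have hx2 : (2*(x+2)) ≠ 0 := by positivity
  have hlog : HasDerivAt (fun t : ℝ => t * Real.log t) (Real.log x + 1) x := by
    have := (hasDerivAt_id x).fun_mul (Real.hasDerivAt_log (ne_of_gt hx))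
    simpa [mul_comm, add_comm, mul_inv_cancel₀ (ne_of_gt hx)] using this
  have hnum : HasDerivAt (fun t : ℝ => 3*(t-1)^2) (3*(2*(x-1))) x := by
    have : HasDerivAt (fun t : ℝ => (t-1)^2) (2*(x-1)^1) x := by
      simpa using ((hasDerivAt_id x).sub_const 1).fun_pow 2
    simpa [mul_comm, mul_assoc] using this.const_mul 3
  have hden : HasDerivAt (fun t : ℝ => 2*(t+2)) 2 x := by
    simpa using ((hasDerivAt_id x).add_const 2).const_mul 2
  have hq := hnum.div hden hx2
  have := ((hlog.sub (hasDerivAt_id x)).add_const 1).sub hq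
  refine this.congr_deriv ?_
  unfold psiF
  field_simp
  ring

private lemma psiF_one : psiF 1 = 0 := by norm_num [psiF]

private lemma FF_one : FF 1 = 0 := by norm_num [FF]

private lemma psiF_mono {s : Set ℝ} (hs : Convex ℝ s) (hpos : ∀ x ∈ s, 0 < x) :
    MonotoneOn psiF s := by
  have hint : ∀ x ∈ interior s, 0 < x := fun x hx => hpos x (interior_subset hx)
  refine monotoneOn_of_deriv_nonneg hs
    (fun x hx => (hasDerivAt_psiF (hpos x hx)).continuousAt.continuousWithinAt)
    (fun x hx => (hasDerivAt_psiF (hint x hx)).differentiableAt.differentiableWithinAt)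
    (fun x hx => ?_)
  rw [(hasDerivAt_psiF (hint x hx)).deriv]
  have := hint x hx
  positivity

private lemma psiF_nonneg {x : ℝ} (hx : 1 ≤ x) : 0 ≤ psiF x := by
  have h := psiF_mono (convex_Icc 1 x) (fun y hy => lt_of_lt_of_le one_pos hy.1)
  have := h (Set.left_mem_Icc.2 hx) (Set.right_mem_Icc.2 hx) hx
  rwa [psiF_one] at this

private lemma psiF_nonpos {x : ℝ} (hx0 : 0 < x) (hx : x ≤ 1) : psiF x ≤ 0 := by
  have h := psiF_mono (convex_Icc x 1) (fun y hy => lt_of_lt_of_le hx0 hy.1)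
  have := h (Set.left_mem_Icc.2 hx) (Set.right_mem_Icc.2 hx) hx
  rwa [psiF_one] at this

private lemma FF_nonneg {x : ℝ} (hx : 0 < x) : 0 ≤ FF x := by
  rcases le_total x 1 with hx1 | hx1
  · have h : AntitoneOn FF (Set.Icc x 1) := by
      refine antitoneOn_of_deriv_nonpos (convex_Icc x 1)
        (fun y hy => (hasDerivAt_FF (lt_of_lt_of_le hx hy.1)).continuousAt.continuousWithinAt)
        (fun y hy => (hasDerivAt_FF (lt_of_lt_of_le hx
          (interior_subset hy).1)).differentiableAt.differentiableWithinAt)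
        (fun y hy => ?_)
      rw [interior_Icc] at hy
      rw [(hasDerivAt_FF (lt_of_lt_of_le hx hy.1.le)).deriv]
      exact psiF_nonpos (lt_of_lt_of_le hx hy.1.le) hy.2.le
    have := h (Set.left_mem_Icc.2 hx1) (Set.right_mem_Icc.2 hx1) hx1
    rwa [FF_one] at this
  · have h : MonotoneOn FF (Set.Icc 1 x) := by
      refine monotoneOn_of_deriv_nonneg (convex_Icc 1 x)
        (fun y hy => (hasDerivAt_FF (lt_of_lt_of_le one_pos hy.1)).continuousAt.continuousWithinAt)
        (fun y hy => (hasDerivAt_FF (lt_of_lt_of_le one_pos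
          (interior_subset hy).1)).differentiableAt.differentiableWithinAt)
        (fun y hy => ?_)
      rw [interior_Icc] at hy
      rw [(hasDerivAt_FF (lt_of_lt_of_le one_pos hy.1.le)).deriv]
      exact psiF_nonneg hy.1.le
    have := h (Set.left_mem_Icc.2 hx1) (Set.right_mem_Icc.2 hx1) hx1
    rwa [FF_one] at this

/-- Refined pointwise inequality: `3(t−1)²/(2(t+2)) ≤ t log t − t + 1` for `t > 0`. -/
private lemma log_ineq {t : ℝ} (ht : 0 < t) :
    3*(t-1)^2/(2*(t+2)) ≤ t * Real.log t - t + 1 := by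
  have := FF_nonneg ht
  unfold FF at this
  linarith

/-- Pointwise KL bound: for `x, y > 0`, `3(x−y)²/(2(x+2y)) ≤ x log(x/y) − x + y`. -/
private lemma kl_pointwise {x y : ℝ} (hx : 0 < x) (hy : 0 < y) :
    3*(x-y)^2/(2*(x+2*y)) ≤ x * Real.log (x/y) - x + y := by
  have ht : 0 < x / y := by positivity
  have h := log_ineq ht
  have h2 : 0 < 2*(x/y+2) := by positivity
  rw [div_le_iff₀ h2] at h
  have h3 := mul_le_mul_of_nonneg_right h (sq_nonneg y)
  rw [div_le_iff₀ (by positivity : (0:ℝ) < 2*(x+2*y))]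
  have hy' : y ≠ 0 := ne_of_gt hy
  have key : 3*(x-y)^2 = 3*(x/y-1)^2*y^2 := by field_simp
  have key2 : (x * Real.log (x/y) - x + y)*(2*(x+2*y))
      = (x/y * Real.log (x/y) - x/y + 1)*(2*(x/y+2))*y^2 := by
    set L := Real.log (x/y)
    field_simp
  rw [key, key2]
  exact h3

/-- Discrete Pinsker inequality. -/
private lemma pinsker {n : ℕ} (p q : Fin n → ℝ) (hp : ∀ i, 0 < p i) (hq : ∀ i, 0 < q i)
    (hp1 : ∑ i, p i = 1) (hq1 : ∑ i, q i = 1) :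
    (∑ i, |p i - q i|) ^ 2 ≤ 2 * ∑ i, p i * Real.log (p i / q i) := by
  have hcpos : ∀ i, (0:ℝ) < p i + 2 * q i := fun i => by
    have := hp i; have := hq i; linarith
  have h1 : (∑ i, |p i - q i|) ^ 2 ≤
      (∑ i, (p i - q i)^2 * (3/(2*(p i + 2*q i)))) * ∑ i, (2*(p i + 2*q i)/3) := by
    calc (∑ i, |p i - q i|)^2
        = (∑ i, (|p i - q i| * Real.sqrt (3/(2*(p i + 2*q i)))) *
            Real.sqrt (2*(p i + 2*q i)/3))^2 := by
          congr 1
          refine Finset.sum_congr rfl fun i _ => ?_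
          have hc := hcpos i
          rw [mul_assoc, ← Real.sqrt_mul (by positivity)]
          rw [show 3/(2*(p i + 2*q i)) * (2*(p i + 2*q i)/3) = 1 by
            field_simp, Real.sqrt_one, mul_one]
      _ ≤ (∑ i, (|p i - q i| * Real.sqrt (3/(2*(p i + 2*q i))))^2) *
            ∑ i, (Real.sqrt (2*(p i + 2*q i)/3))^2 :=
          Finset.sum_mul_sq_le_sq_mul_sq _ _ _
      _ = _ := by
          congr 1
          · refine Finset.sum_congr rfl fun i _ => ?_
            have hc := hcpos i
            rw [mul_pow, sq_abs, Real.sq_sqrt (by positivity)]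
          · exact Finset.sum_congr rfl fun i _ =>
              Real.sq_sqrt (by have := hcpos i; positivity)
  have h2 : ∑ i, (2*(p i + 2*q i)/3) = 2 := by
    have e : ∀ i : Fin n, 2*(p i + 2*q i)/3 = (2/3) * p i + (4/3) * q i := fun i => by ring
    simp_rw [e]
    rw [Finset.sum_add_distrib, ← Finset.mul_sum, ← Finset.mul_sum, hp1, hq1]
    norm_num
  have h3 : ∑ i, (p i - q i)^2 * (3/(2*(p i + 2*q i))) ≤
      ∑ i, (p i * Real.log (p i / q i) - p i + q i) := by
    refine Finset.sum_le_sum fun i _ => ?_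
    have := kl_pointwise (hp i) (hq i)
    calc (p i - q i)^2 * (3/(2*(p i + 2*q i)))
        = 3*(p i - q i)^2/(2*(p i + 2*q i)) := by ring
      _ ≤ _ := this
  have h4 : ∑ i, (p i * Real.log (p i / q i) - p i + q i)
      = ∑ i, p i * Real.log (p i / q i) := by
    rw [Finset.sum_add_distrib, Finset.sum_sub_distrib, hp1, hq1]
    ring
  have h5 : 0 ≤ ∑ i, (p i - q i)^2 * (3/(2*(p i + 2*q i))) :=
    Finset.sum_nonneg fun i _ => by have := hcpos i; positivity
  rw [h2] at h1
  rw [h4] at h3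
  linarith

private lemma plan_exp {n : ℕ} (C : Matrix (Fin n) (Fin n) ℝ) {γ : ℝ} (hγ : γ ≠ 0)
    (f g : Fin n → ℝ) (i j : Fin n) :
    Real.exp ((f i + g j - C i j)/γ) = plan C γ f g i j := by
  simp only [plan]
  rw [← Real.exp_add, ← Real.exp_add]
  congr 1
  field_simp
  ring

private lemma plan_swap {n : ℕ} (C : Matrix (Fin n) (Fin n) ℝ) (γ : ℝ)
    (f g : Fin n → ℝ) (i j : Fin n) :
    plan C.transpose γ g f i j = plan C γ f g j i := by
  simp only [plan, Matrix.transpose_apply]; ring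

private lemma dualObj_swap {n : ℕ} (a b : Fin n → ℝ) (C : Matrix (Fin n) (Fin n) ℝ)
    (γ : ℝ) (f g : Fin n → ℝ) :
    dualObj b a C.transpose γ g f = dualObj a b C γ f g := by
  unfold dualObj
  have h : (∑ j, ∑ i, Real.exp ((g j + f i - C.transpose j i)/γ))
      = ∑ i, ∑ j, Real.exp ((f i + g j - C i j)/γ) := by
    rw [Finset.sum_comm]
    exact Finset.sum_congr rfl fun i _ => Finset.sum_congr rfl fun j _ => by
      rw [Matrix.transpose_apply, add_comm (g j)]
  rw [h]
  ring

private lemma main_step {n : ℕ} (hn : n ≠ 0) (a b : Fin n → ℝ)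
    (C : Matrix (Fin n) (Fin n) ℝ) {γ : ℝ} (hγ : 0 < γ)
    (ha0 : ∀ i, 0 < a i) (hb0 : ∀ j, 0 < b j)
    (ha1 : ∑ i, a i = 1) (hb1 : ∑ j, b j = 1)
    (f g f' : Fin n → ℝ)
    (hcol : ∀ j, ∑ i, plan C γ f g i j = b j)
    (hf' : f' = fun i => γ * Real.log (a i) -
        γ * Real.log (∑ j, Real.exp (-C i j / γ) * Real.exp (g j / γ))) :
    γ / 2 * ((∑ i, |(∑ j, plan C γ f g i j) - a i|) +
        (∑ j, |(∑ i, plan C γ f g i j) - b j|)) ^ 2 ≤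
      dualObj a b C γ f' g - dualObj a b C γ f g := by
  haveI : NeZero n := ⟨hn⟩
  have hγ' : γ ≠ 0 := ne_of_gt hγ
  have hrpos : ∀ i, 0 < ∑ j, Real.exp (-C i j / γ) * Real.exp (g j / γ) := fun i =>
    Finset.sum_pos (fun j _ => by positivity) Finset.univ_nonempty
  have hRfr : ∀ i, ∑ j, plan C γ f g i j
      = Real.exp (f i / γ) * ∑ j, Real.exp (-C i j / γ) * Real.exp (g j / γ) := by
    intro i
    rw [Finset.mul_sum]
    exact Finset.sum_congr rfl fun j _ => by simp only [plan]; ring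
  have hRpos : ∀ i, 0 < ∑ j, plan C γ f g i j := fun i => by
    rw [hRfr i]; have := hrpos i; positivity
  have hR1 : ∑ i, ∑ j, plan C γ f g i j = 1 := by
    rw [Finset.sum_comm (f := fun i j => plan C γ f g i j)]
    calc ∑ j, ∑ i, plan C γ f g i j = ∑ j, b j :=
          Finset.sum_congr rfl fun j _ => hcol j
      _ = 1 := hb1
  have hexpf' : ∀ i, Real.exp (f' i / γ)
      = a i / ∑ j, Real.exp (-C i j / γ) * Real.exp (g j / γ) := by
    intro i
    rw [hf']
    simp only
    rw [show (γ * Real.log (a i) -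
          γ * Real.log (∑ j, Real.exp (-C i j / γ) * Real.exp (g j / γ))) / γ
        = Real.log (a i) - Real.log (∑ j, Real.exp (-C i j / γ) * Real.exp (g j / γ)) by
      field_simp]
    rw [Real.exp_sub, Real.exp_log (ha0 i), Real.exp_log (hrpos i)]
  have hT' : ∑ i, ∑ j, Real.exp ((f' i + g j - C i j)/γ) = 1 := by
    have hrow : ∀ i, ∑ j, Real.exp ((f' i + g j - C i j)/γ) = a i := by
      intro i
      have e : ∀ j, Real.exp ((f' i + g j - C i j)/γ)
          = Real.exp (f' i / γ) * (Real.exp (-C i j/γ) * Real.exp (g j/γ)) := by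
        intro j
        rw [← Real.exp_add, ← Real.exp_add]
        congr 1
        field_simp
        ring
      rw [Finset.sum_congr rfl fun j _ => e j, ← Finset.mul_sum, hexpf' i,
        div_mul_cancel₀ _ (ne_of_gt (hrpos i))]
    rw [Finset.sum_congr rfl fun i _ => hrow i, ha1]
  have hT : ∑ i, ∑ j, Real.exp ((f i + g j - C i j)/γ) = 1 := by
    rw [Finset.sum_congr rfl fun i _ =>
      Finset.sum_congr rfl fun j _ => plan_exp C hγ' f g i j]
    exact hR1
  have hdiff : dualObj a b C γ f' g - dualObj a b C γ f g
      = γ * ∑ i, a i * Real.log (a i / ∑ j, plan C γ f g i j) := by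
    have h5 : dualObj a b C γ f' g - dualObj a b C γ f g
        = ∑ i, (f' i - f i) * a i := by
      unfold dualObj
      rw [hT', hT]
      have e : ∀ i : Fin n, (f' i - f i) * a i = f' i * a i - f i * a i := fun i => by ring
      simp_rw [e, Finset.sum_sub_distrib]
      ring
    rw [h5, Finset.mul_sum]
    refine Finset.sum_congr rfl fun i _ => ?_
    have hlogR : Real.log (∑ j, plan C γ f g i j)
        = f i / γ + Real.log (∑ j, Real.exp (-C i j / γ) * Real.exp (g j / γ)) := by
      rw [hRfr i, Real.log_mul (Real.exp_ne_zero _) (ne_of_gt (hrpos i)), Real.log_exp]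
    rw [Real.log_div (ne_of_gt (ha0 i)) (ne_of_gt (hRpos i)), hlogR, hf']
    simp only
    field_simp
    ring
  have hcolzero : ∑ j, |(∑ i, plan C γ f g i j) - b j| = 0 := by
    simp [hcol]
  rw [hcolzero, add_zero, hdiff]
  have habs : ∑ i, |(∑ j, plan C γ f g i j) - a i|
      = ∑ i, |a i - ∑ j, plan C γ f g i j| :=
    Finset.sum_congr rfl fun i _ => abs_sub_comm _ _
  rw [habs]
  have hp := pinsker a (fun i => ∑ j, plan C γ f g i j) ha0 hRpos ha1 hR1
  have := mul_le_mul_of_nonneg_left hp (by positivity : (0:ℝ) ≤ γ/2)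
  linarith

/-- **One-iteration improvement of Sinkhorn** (Lemma 2 of Altschuler–Weed–Rigollet):
for `k ≥ 2`,
`h(f_{k+1},g_{k+1}) − h(f_k,g_k) ≥ (γ/2)(‖P_k𝟏 − a‖₁ + ‖P_kᵀ𝟏 − b‖₁)²`. -/
theorem sinkhorn_one_step_improvement {n : ℕ} (a b : Fin n → ℝ)
    (C : Matrix (Fin n) (Fin n) ℝ) (γ : ℝ) (hγ : 0 < γ)
    (ha0 : ∀ i, 0 < a i) (hb0 : ∀ j, 0 < b j)
    (ha1 : ∑ i, a i = 1) (hb1 : ∑ j, b j = 1)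
    (hC : ∀ i j, 0 ≤ C i j)
    (f g : ℕ → Fin n → ℝ) (hiter : SinkhornSeq a b C γ f g)
    (k : ℕ) (hk : 2 ≤ k) :
    γ / 2 * ((∑ i, |(∑ j, plan C γ (f k) (g k) i j) - a i|) +
        (∑ j, |(∑ i, plan C γ (f k) (g k) i j) - b j|)) ^ 2 ≤
      dualObj a b C γ (f (k+1)) (g (k+1)) - dualObj a b C γ (f k) (g k) := by
  have hn : n ≠ 0 := by
    rintro rfl
    simp at ha1
  haveI : NeZero n := ⟨hn⟩
  have hγ' : γ ≠ 0 := ne_of_gt hγ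
  obtain ⟨m, rfl⟩ : ∃ m, k = m + 1 := ⟨k - 1, by omega⟩
  rcases Nat.even_or_odd m with hm | hm
  · -- m even, so k = m+1 is odd: row marginals of P_k equal a; step k updates g.
    have hprev := (hiter m).1 hm
    have hfk : f (m+1) = fun i => γ * Real.log (a i) -
        γ * Real.log (∑ j, Real.exp (-C i j / γ) * Real.exp (g m j / γ)) := hprev.1
    have hgk : g (m+1) = g m := hprev.2
    have hodd : ¬ Even (m+1) := by
      rw [Nat.even_add_one]
      exact fun h => h hm
    have hstep := (hiter (m+1)).2 hodd
    have hfk1 : f (m+1+1) = f (m+1) := hstep.1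
    have hgk1 : g (m+1+1) = fun j => γ * Real.log (b j) -
        γ * Real.log (∑ i, Real.exp (-C i j / γ) * Real.exp (f (m+1) i / γ)) := hstep.2
    have hspos : ∀ i, 0 < ∑ j, Real.exp (-C i j / γ) * Real.exp (g (m+1) j / γ) := fun i =>
      Finset.sum_pos (fun j _ => by positivity) Finset.univ_nonempty
    have hexpfk : ∀ i, Real.exp (f (m+1) i / γ)
        = a i / ∑ j, Real.exp (-C i j / γ) * Real.exp (g (m+1) j / γ) := by
      intro i
      rw [hfk, hgk]
      simp only
      rw [show (γ * Real.log (a i) -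
            γ * Real.log (∑ j, Real.exp (-C i j / γ) * Real.exp (g m j / γ))) / γ
          = Real.log (a i) - Real.log (∑ j, Real.exp (-C i j / γ) * Real.exp (g m j / γ)) by
        field_simp]
      rw [Real.exp_sub, Real.exp_log (ha0 i),
        Real.exp_log (by rw [← hgk]; exact hspos i)]
    have hrow : ∀ i, ∑ j, plan C γ (f (m+1)) (g (m+1)) i j = a i := by
      intro i
      have e : ∑ j, plan C γ (f (m+1)) (g (m+1)) i j
          = (∑ j, Real.exp (-C i j / γ) * Real.exp (g (m+1) j / γ)) *
              Real.exp (f (m+1) i / γ) := by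
        rw [Finset.sum_mul]
        exact Finset.sum_congr rfl fun j _ => by simp only [plan]; ring
      rw [e, hexpfk i, mul_comm, div_mul_cancel₀ _ (ne_of_gt (hspos i))]
    have hcolT : ∀ j, ∑ i, plan C.transpose γ (g (m+1)) (f (m+1)) i j = a j := by
      intro j
      rw [Finset.sum_congr rfl fun i _ => plan_swap C γ (f (m+1)) (g (m+1)) i j]
      exact hrow j
    have hg'T : g (m+1+1) = fun i => γ * Real.log (b i) -
        γ * Real.log (∑ j, Real.exp (-C.transpose i j / γ) *
          Real.exp (f (m+1) j / γ)) := by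
      rw [hgk1]
      funext x
      simp only [Matrix.transpose_apply]
    have key := main_step hn b a C.transpose hγ hb0 ha0 hb1 ha1
      (g (m+1)) (f (m+1)) (g (m+1+1)) hcolT hg'T
    simp only [plan_swap, dualObj_swap] at key
    have hbase : (∑ i, |(∑ j, plan C γ (f (m+1)) (g (m+1)) i j) - a i|) +
          (∑ j, |(∑ i, plan C γ (f (m+1)) (g (m+1)) i j) - b j|)
        = (∑ i, |(∑ j, plan C γ (f (m+1)) (g (m+1)) j i) - b i|) +
          (∑ j, |(∑ i, plan C γ (f (m+1)) (g (m+1)) j i) - a j|) := by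
      rw [add_comm]
    rw [hfk1, hbase]
    exact key
  · -- m odd, so k = m+1 is even: column marginals of P_k equal b; step k updates f.
    have hne : ¬ Even m := by
      rw [Nat.even_iff]
      rw [Nat.odd_iff] at hm
      omega
    have hprev := (hiter m).2 hne
    have hfk : f (m+1) = f m := hprev.1
    have hgk : g (m+1) = fun j => γ * Real.log (b j) -
        γ * Real.log (∑ i, Real.exp (-C i j / γ) * Real.exp (f m i / γ)) := hprev.2
    have heven : Even (m+1) := Nat.even_add_one.mpr hne
    have hstep := (hiter (m+1)).1 heven
    have hfk1 : f (m+1+1) = fun i => γ * Real.log (a i) -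
        γ * Real.log (∑ j, Real.exp (-C i j / γ) * Real.exp (g (m+1) j / γ)) := hstep.1
    have hgk1 : g (m+1+1) = g (m+1) := hstep.2
    have hSpos : ∀ j, 0 < ∑ i, Real.exp (-C i j / γ) * Real.exp (f (m+1) i / γ) := fun j =>
      Finset.sum_pos (fun i _ => by positivity) Finset.univ_nonempty
    have hexpgk : ∀ j, Real.exp (g (m+1) j / γ)
        = b j / ∑ i, Real.exp (-C i j / γ) * Real.exp (f (m+1) i / γ) := by
      intro j
      rw [hgk, hfk]
      simp only
      rw [show (γ * Real.log (b j) -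
            γ * Real.log (∑ i, Real.exp (-C i j / γ) * Real.exp (f m i / γ))) / γ
          = Real.log (b j) - Real.log (∑ i, Real.exp (-C i j / γ) * Real.exp (f m i / γ)) by
        field_simp]
      rw [Real.exp_sub, Real.exp_log (hb0 j),
        Real.exp_log (by rw [← hfk]; exact hSpos j)]
    have hcol : ∀ j, ∑ i, plan C γ (f (m+1)) (g (m+1)) i j = b j := by
      intro j
      have e : ∑ i, plan C γ (f (m+1)) (g (m+1)) i j
          = (∑ i, Real.exp (-C i j / γ) * Real.exp (f (m+1) i / γ)) *
              Real.exp (g (m+1) j / γ) := by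
        rw [Finset.sum_mul]
        exact Finset.sum_congr rfl fun i _ => by simp only [plan]; ring
      rw [e, hexpgk j, mul_comm, div_mul_cancel₀ _ (ne_of_gt (hSpos j))]
    rw [hgk1]
    exact main_step hn a b C hγ ha0 hb0 ha1 hb1
      (f (m+1)) (g (m+1)) (f (m+1+1)) hcol hfk1
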